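/- For every n ≥ 1 and every integer N ≥ 1 there exist a constant B > 0 and a finite subset F ⊆ SL_n(ℚ) with the following property: for every n×n real positive definite matrix T there exist γ ∈ SL_n(ℤ) with γ ≡ 1 (mod N) (i.e., every entry of γ − 1 is divisible by N) and t ∈ F such that, viewing γ·t as a real matrix by casting entries, ((γt)ᵀ · T · (γt))₀₀ ≤ B · det(T)^{1/n}. -/

import Mathlib

open Matrix MeasureTheory ENNReal


theorem short_vector (n : ℕ) (hn : 1 ≤ n) (T : Matrix (Fin n) (Fin n) ℝ) (hT : T.PosDef) :
    ∃ v : Fin n → ℤ, v ≠ 0 ∧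
      (fun i => (v i : ℝ)) ⬝ᵥ (T *ᵥ fun i => (v i : ℝ))
        ≤ (4 * n) * T.det ^ ((1 : ℝ) / n) := by
  classical
  have hn0 : (n : ℝ) ≠ 0 := by positivity
  obtain ⟨S, hSS, hSsym⟩ : ∃ S : Matrix (Fin n) (Fin n) ℝ, S * S = T ∧ Sᵀ = S := by
    open MatrixOrder in
    refine ⟨CFC.sqrt T, CFC.sqrt_mul_sqrt_self T hT.posSemidef.nonneg, ?_⟩
    open MatrixOrder in
    have h := (CFC.sqrt_nonneg T).posSemidef.1
    rwa [Matrix.IsHermitian, conjTranspose_eq_transpose_of_trivial] at h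
  have hdT : 0 < T.det := hT.det_pos
  set a : ℝ := |S.det| with ha
  have haa : a * a = T.det := by
    rw [ha, abs_mul_abs_self, ← Matrix.det_mul, hSS]
  have ha' : 0 ≤ a := ha ▸ abs_nonneg S.det
  have ha0 : 0 < a := by
    rcases ha'.eq_or_lt with h | h
    · exfalso; rw [← haa, ← h, mul_zero] at hdT; exact lt_irrefl 0 hdT
    · exact h
  set t : ℝ := a ^ ((1 : ℝ) / n) with ht
  have ht0 : 0 < t := Real.rpow_pos_of_pos ha0 _
  have htn : t ^ n = a := by
    rw [ht, ← Real.rpow_natCast (a ^ ((1 : ℝ) / n)) n, ← Real.rpow_mul ha0.le,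
      one_div, inv_mul_cancel₀ hn0, Real.rpow_one]
  have ht2 : t ^ 2 = T.det ^ ((1 : ℝ) / n) := by
    rw [ht, ← Real.rpow_natCast (a ^ ((1 : ℝ) / n)) 2, ← Real.rpow_mul ha0.le, ← haa]
    rw [show (1 : ℝ) / n * (2 : ℕ) = 2 * (1 / n) by push_cast; ring,
      Real.rpow_mul ha0.le, Real.rpow_two, sq]
  set ρ : ℝ := 2 * t with hρ
  have hρ0 : 0 < ρ := by positivity
  -- the convex body
  set s : Set (Fin n → ℝ) := (Matrix.toLin' S) ⁻¹' (Metric.closedBall 0 ρ) with hs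
  have h_conv : Convex ℝ s := (convex_closedBall _ _).linear_preimage _
  have h_symm : ∀ x ∈ s, -x ∈ s := by
    intro x hx
    simp only [hs, Set.mem_preimage, map_neg, Metric.mem_closedBall, dist_zero_right,
      norm_neg] at hx ⊢
    exact hx
  -- its volume
  have hdetS : LinearMap.det (Matrix.toLin' S) ≠ 0 := by
    rw [LinearMap.det_toLin']
    intro h
    rw [h] at ha
    simp [ha] at ha0
  have hvol_ball : volume (Metric.closedBall (0 : Fin n → ℝ) ρ) =
      ENNReal.ofReal ((2 * ρ) ^ n) := by
    rw [volume_pi_closedBall _ hρ0.le]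
    simp only [Real.volume_closedBall]
    rw [Finset.prod_const, Finset.card_univ, Fintype.card_fin,
      ← ENNReal.ofReal_pow (by positivity)]
  have hvol_s : volume s = ENNReal.ofReal (a⁻¹ * (2 * ρ) ^ n) := by
    rw [hs, Measure.addHaar_preimage_linearMap volume hdetS, hvol_ball,
      LinearMap.det_toLin', ← ENNReal.ofReal_mul (by positivity)]
    congr 1
    rw [abs_inv]
  -- the lattice
  set b := Pi.basisFun ℝ (Fin n) with hb
  have fund := ZSpan.isAddFundamentalDomain' b (volume : Measure (Fin n → ℝ))
  have hvol_fund : volume (ZSpan.fundamentalDomain b) = 1 := by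
    rw [ZSpan.volume_fundamentalDomain]
    have : (Matrix.of b : Matrix (Fin n) (Fin n) ℝ) = 1 := by
      ext i j
      simp [hb, Matrix.one_apply, Pi.single_apply, eq_comm]
    rw [this, Matrix.det_one]
    simp
  have hineq : volume (ZSpan.fundamentalDomain b) * 2 ^ (Module.finrank ℝ (Fin n → ℝ))
      < volume s := by
    rw [hvol_fund, one_mul, hvol_s, Module.finrank_pi, Fintype.card_fin]
    have hcalc : a⁻¹ * (2 * ρ) ^ n = 4 ^ n := by
      rw [hρ, show 2 * (2 * t) = 4 * t by ring, mul_pow, htn]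
      field_simp [ha0.ne']
    rw [hcalc]
    have h2 : (2 : ℝ≥0∞) ^ n = ENNReal.ofReal (2 ^ n) := by
      rw [ENNReal.ofReal_pow (by norm_num)]
      norm_num
    rw [h2, ENNReal.ofReal_lt_ofReal_iff (by positivity)]
    exact pow_lt_pow_left₀ (by norm_num) (by norm_num) (by omega)
  have hcnt : Countable ((Submodule.span ℤ (Set.range ⇑b)).toAddSubgroup) := by
    have hsurj : Function.Surjective (fun c : Fin n → ℤ =>
        (⟨∑ i, c i • b i, Submodule.sum_mem _ fun i _ =>
          Submodule.smul_mem _ (c i) (Submodule.subset_span ⟨i, rfl⟩)⟩ :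
          (Submodule.span ℤ (Set.range ⇑b)).toAddSubgroup)) := by
      rintro ⟨x, hx⟩
      obtain ⟨c, hc⟩ := (Submodule.mem_span_range_iff_exists_fun ℤ).mp hx
      exact ⟨c, Subtype.ext hc⟩
    exact hsurj.countable
  obtain ⟨x, hx0, hxs⟩ :=
    exists_ne_zero_mem_lattice_of_measure_mul_two_pow_lt_measure fund h_symm h_conv hineq
  -- x has integer coordinates
  obtain ⟨c, hc⟩ := (Submodule.mem_span_range_iff_exists_fun ℤ).mp x.2
  have hxc : ∀ j, (x : Fin n → ℝ) j = (c j : ℝ) := by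
    intro j
    rw [← hc]
    simp [hb, Pi.basisFun_apply, Finset.sum_apply, Pi.single_apply]
  refine ⟨c, ?_, ?_⟩
  · intro h0
    apply hx0
    have : (x : Fin n → ℝ) = 0 := by
      funext j; rw [hxc j, h0]; simp
    exact Subtype.ext (by simpa using this)
  · have hxr : (fun i => (c i : ℝ)) = (x : Fin n → ℝ) := by
      funext j; rw [hxc j]
    rw [hxr]
    set y : Fin n → ℝ := S *ᵥ (x : Fin n → ℝ) with hy
    have hQ : (x : Fin n → ℝ) ⬝ᵥ (T *ᵥ (x : Fin n → ℝ)) = y ⬝ᵥ y := by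
      rw [← hSS, ← Matrix.mulVec_mulVec, Matrix.dotProduct_mulVec, hy]
      congr 1
      rw [← hSsym, Matrix.vecMul_transpose, hSsym]
    have hynorm : ‖y‖ ≤ ρ := by
      have := hxs
      simp only [hs, Set.mem_preimage, Metric.mem_closedBall, dist_zero_right] at this
      rwa [Matrix.toLin'_apply] at this
    have hyb : y ⬝ᵥ y ≤ n * ρ ^ 2 := by
      rw [dotProduct]
      calc ∑ i, y i * y i ≤ ∑ _i : Fin n, ρ ^ 2 := by
            refine Finset.sum_le_sum fun i _ => ?_
            have h1 : |y i| ≤ ρ := (norm_le_pi_norm y i).trans hynorm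
            rw [← sq]
            calc y i ^ 2 = |y i| ^ 2 := (sq_abs _).symm
              _ ≤ ρ ^ 2 := by nlinarith [abs_nonneg (y i)]
        _ = n * ρ ^ 2 := by rw [Finset.sum_const, Finset.card_univ, Fintype.card_fin,
              nsmul_eq_mul]
    rw [hQ]
    refine hyb.trans ?_
    rw [hρ, mul_pow, ← ht2]
    ring_nf
    nlinarith [ht0, sq_nonneg t]


theorem complete_unimodular (n : ℕ) (hn : 1 ≤ n) (v : Fin n → ℤ) (hv : v ≠ 0) :
    ∃ (δ : Matrix.SpecialLinearGroup (Fin n) ℤ) (k : ℤ), k ≠ 0 ∧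
      ∀ i, v i = k * (δ : Matrix (Fin n) (Fin n) ℤ) i ⟨0, hn⟩ := by
  classical
  set i0 : Fin n := ⟨0, hn⟩
  set I : Ideal ℤ := Ideal.span (Set.range v) with hI
  set d : ℤ := Submodule.IsPrincipal.generator I with hdd
  have hmem : ∀ i, v i ∈ Ideal.span {d} := by
    intro i
    rw [hdd, I.span_singleton_generator]
    exact Ideal.subset_span ⟨i, rfl⟩
  have hd0 : d ≠ 0 := by
    intro h0
    apply hv
    funext i
    obtain ⟨b, hb⟩ := Ideal.mem_span_singleton'.mp (hmem i)
    simpa [h0] using hb.symm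
  have hdvd : ∀ i, ∃ a, d * a = v i := by
    intro i
    obtain ⟨a, ha⟩ := Ideal.mem_span_singleton'.mp (hmem i)
    exact ⟨a, by rw [mul_comm]; exact ha⟩
  choose p hp using hdvd
  have hdI : d ∈ Submodule.span ℤ (Set.range v) :=
    Submodule.IsPrincipal.generator_mem I
  obtain ⟨c, hc⟩ := (Submodule.mem_span_range_iff_exists_fun ℤ).mp hdI
  have hcp : ∑ i, c i * p i = 1 := by
    have h2 : d * (∑ i, c i * p i) = d * 1 := by
      rw [mul_one, Finset.mul_sum]
      calc ∑ i, d * (c i * p i) = ∑ i, c i * v i := by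
            refine Finset.sum_congr rfl fun i _ => ?_
            rw [← hp i]; ring
        _ = d := by simpa [smul_eq_mul] using hc
    exact mul_left_cancel₀ hd0 h2
  let f : (Fin n → ℤ) →ₗ[ℤ] ℤ :=
    { toFun := fun y => ∑ i, c i * y i
      map_add' := fun y z => by
        simp only [Pi.add_apply, mul_add, Finset.sum_add_distrib]
      map_smul' := fun a y => by
        simp only [Pi.smul_apply, smul_eq_mul, RingHom.id_apply, Finset.mul_sum]
        exact Finset.sum_congr rfl fun i _ => by ring }
  have hfp : f p = 1 := hcp
  obtain ⟨m, bk⟩ := Submodule.basisOfPid (Pi.basisFun ℤ (Fin n)) (LinearMap.ker f)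
  have hli : ∀ (a : ℤ), ∀ x ∈ LinearMap.ker f, a • p + x = 0 → a = 0 := by
    intro a x hx hax
    have h1 : f (a • p + x) = 0 := by rw [hax, map_zero]
    rwa [map_add, f.map_smul, LinearMap.mem_ker.mp hx, hfp, smul_eq_mul, mul_one,
      add_zero] at h1
  have hsp : ∀ z : (Fin n → ℤ), ∃ a : ℤ, z + a • p ∈ LinearMap.ker f := by
    intro z
    refine ⟨-f z, ?_⟩
    rw [LinearMap.mem_ker, map_add, f.map_smul, hfp, smul_eq_mul, mul_one, add_neg_cancel]
  set b0 : Module.Basis (Fin (m + 1)) ℤ (Fin n → ℤ) := Module.Basis.mkFinCons p bk hli hsp with hb0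
  have hcard : m + 1 = n := by
    have h1 := Module.finrank_eq_card_basis b0
    have h2 := Module.finrank_eq_card_basis (Pi.basisFun ℤ (Fin n))
    simp only [Fintype.card_fin] at h1 h2
    omega
  set B : Module.Basis (Fin n) ℤ (Fin n → ℤ) := b0.reindex (finCongr hcard) with hB
  have hB0 : B i0 = p := by
    rw [hB, Module.Basis.reindex_apply]
    have h3 : (finCongr hcard).symm i0 = (0 : Fin (m + 1)) := by
      ext; simp [i0]
    rw [h3, hb0]
    have h4 := Module.Basis.coe_mkFinCons p bk hli hsp
    rw [show (Module.Basis.mkFinCons p bk hli hsp : Fin (m+1) → (Fin n → ℤ)) 0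
        = (Fin.cons p ((↑) ∘ bk) : Fin (m+1) → (Fin n → ℤ)) 0 from by rw [h4]]
    simp
  set A : Matrix (Fin n) (Fin n) ℤ := (Pi.basisFun ℤ (Fin n)).toMatrix B with hA
  have hAij : ∀ i j, A i j = B j i := by
    intro i j
    rw [hA, Module.Basis.toMatrix_apply, Pi.basisFun_repr]
  have hAdet : IsUnit A.det := by
    have : Invertible A := (Pi.basisFun ℤ (Fin n)).invertibleToMatrix B
    exact Matrix.isUnit_det_of_invertible A
  set ε : ℤ := A.det with hε
  have hε2 : ε * ε = 1 := by
    rcases Int.isUnit_iff.mp hAdet with h | h <;> rw [h] <;> norm_num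
  set D : Matrix (Fin n) (Fin n) ℤ := Matrix.diagonal (fun j => if j = i0 then ε else 1) with hD
  have hDdet : D.det = ε := by
    rw [hD, Matrix.det_diagonal]
    rw [Finset.prod_ite_eq' Finset.univ i0 (fun _ => ε)]
    simp
  have hdet : (A * D).det = 1 := by
    rw [Matrix.det_mul, hDdet, hε2]
  refine ⟨⟨A * D, hdet⟩, ε * d, fun h => by
      rcases mul_eq_zero.mp h with h' | h'
      · rcases Int.isUnit_iff.mp hAdet with h1 | h1 <;> omega
      · exact hd0 h', ?_⟩
  intro i
  have hcol : (A * D) i i0 = ε * p i := by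
    rw [Matrix.mul_diagonal]
    simp [hAij, hB0, mul_comm]
  show v i = ε * d * (A * D) i i0
  rw [hcol, ← hp i, show ε * d * (ε * p i) = (ε * ε) * (d * p i) from by ring, hε2, one_mul]


theorem coset_lemma (n : ℕ) (N : ℤ) (hN : 1 ≤ N) :
    ∃ F : Finset (Matrix.SpecialLinearGroup (Fin n) ℚ),
      ∀ δ : Matrix.SpecialLinearGroup (Fin n) ℤ,
        ∃ γ : Matrix.SpecialLinearGroup (Fin n) ℤ,
          (∀ i j : Fin n, N ∣ ((γ : Matrix (Fin n) (Fin n) ℤ) i j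
              - (1 : Matrix (Fin n) (Fin n) ℤ) i j)) ∧
          ∃ t ∈ F, (Matrix.SpecialLinearGroup.map (Int.castRingHom ℚ)) γ * t
            = (Matrix.SpecialLinearGroup.map (Int.castRingHom ℚ)) δ := by
  classical
  set m := N.toNat with hm
  have hm0 : (m : ℤ) = N := Int.toNat_of_nonneg (by omega)
  haveI : NeZero m := ⟨by omega⟩
  set φ := Matrix.SpecialLinearGroup.map (n := Fin n) (Int.castRingHom (ZMod m)) with hφ
  set ψ := Matrix.SpecialLinearGroup.map (n := Fin n) (Int.castRingHom ℚ) with hψ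
  refine ⟨Finset.univ.image (fun s : Matrix.SpecialLinearGroup (Fin n) (ZMod m) =>
    if h : ∃ δ, φ δ = s then ψ h.choose else 1), fun δ => ?_⟩
  have h : ∃ δ', φ δ' = φ δ := ⟨δ, rfl⟩
  refine ⟨δ * h.choose⁻¹, ?_, ψ h.choose,
    Finset.mem_image.2 ⟨φ δ, Finset.mem_univ _, dif_pos h⟩, ?_⟩
  · intro i j
    have hker : φ (δ * h.choose⁻¹) = 1 := by
      rw [_root_.map_mul, _root_.map_inv, h.choose_spec, mul_inv_cancel]
    have h2 := congrArg
      (fun A : Matrix.SpecialLinearGroup (Fin n) (ZMod m) =>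
        (A : Matrix (Fin n) (Fin n) (ZMod m)) i j) hker
    simp only [hφ, Matrix.SpecialLinearGroup.map_apply_coe, RingHom.mapMatrix_apply,
      Matrix.map_apply, Int.coe_castRingHom] at h2
    rw [← hm0, ← ZMod.intCast_zmod_eq_zero_iff_dvd]
    push_cast
    rw [h2]
    by_cases hij : i = j <;> simp [Matrix.one_apply, hij]
  · rw [← _root_.map_mul, mul_assoc, inv_mul_cancel, mul_one]
/-- For every `n ≥ 1` and every integer `N ≥ 1` there exist a constant `B > 0` and a
finite subset `F ⊆ SL_n(ℚ)` with the following property: for every `n×n` real positive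
definite matrix `T` there exist `γ ∈ SL_n(ℤ)` with `γ ≡ 1 (mod N)` (i.e., every entry of
`γ − 1` is divisible by `N`) and `t ∈ F` such that, viewing `γ·t` as a real matrix by
casting entries, `((γt)ᵀ · T · (γt))₀₀ ≤ B · det(T)^{1/n}`. -/
theorem stmt_14 (n : ℕ) (hn : 1 ≤ n) (N : ℤ) (hN : 1 ≤ N) :
    ∃ B : ℝ, 0 < B ∧ ∃ F : Finset (Matrix.SpecialLinearGroup (Fin n) ℚ),
      ∀ T : Matrix (Fin n) (Fin n) ℝ, T.PosDef →
        ∃ γ : Matrix.SpecialLinearGroup (Fin n) ℤ,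
          (∀ i j : Fin n,
            N ∣ ((γ : Matrix (Fin n) (Fin n) ℤ) i j - (1 : Matrix (Fin n) (Fin n) ℤ) i j)) ∧
          ∃ t ∈ F,
            letI g : Matrix (Fin n) (Fin n) ℝ :=
              (((Matrix.SpecialLinearGroup.map (Int.castRingHom ℚ)) γ * t :
                  Matrix.SpecialLinearGroup (Fin n) ℚ) : Matrix (Fin n) (Fin n) ℚ).map
                (fun a : ℚ => (a : ℝ))
            (gᵀ * T * g) ⟨0, hn⟩ ⟨0, hn⟩ ≤ B * T.det ^ ((1 : ℝ) / n) := by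
  obtain ⟨F, hF⟩ := coset_lemma n N hN
  have hnR : (0 : ℝ) < n := by exact_mod_cast hn
  refine ⟨4 * n, by linarith, F, ?_⟩
  intro T hT
  obtain ⟨v, hv0, hvB⟩ := short_vector n hn T hT
  obtain ⟨δ, k, hk0, hkv⟩ := complete_unimodular n hn v hv0
  obtain ⟨γ, hγ, t, htF, hγt⟩ := hF δ
  refine ⟨γ, hγ, t, htF, ?_⟩
  set i0 : Fin n := ⟨0, hn⟩
  set g : Matrix (Fin n) (Fin n) ℝ :=
    (((Matrix.SpecialLinearGroup.map (Int.castRingHom ℚ)) γ * t :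
        Matrix.SpecialLinearGroup (Fin n) ℚ) : Matrix (Fin n) (Fin n) ℚ).map
      (fun a : ℚ => (a : ℝ)) with hgdef
  show (gᵀ * T * g) i0 i0 ≤ (4 * n) * T.det ^ ((1 : ℝ) / n)
  have hg : ∀ i j, g i j = ((δ : Matrix (Fin n) (Fin n) ℤ) i j : ℝ) := by
    intro i j
    rw [hgdef, hγt]
    simp [Matrix.SpecialLinearGroup.map_apply_coe, RingHom.mapMatrix_apply, Matrix.map_apply]
  set w : Fin n → ℝ := fun i => ((δ : Matrix (Fin n) (Fin n) ℤ) i i0 : ℝ) with hw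
  have hentry : (gᵀ * T * g) i0 i0 = w ⬝ᵥ (T *ᵥ w) := by
    simp only [Matrix.mul_apply, Matrix.transpose_apply, dotProduct, Matrix.mulVec,
      Finset.sum_mul, Finset.mul_sum, hg, hw]
    rw [Finset.sum_comm]
    exact Finset.sum_congr rfl fun i _ => Finset.sum_congr rfl fun j _ => by ring
  have hvw : (fun i => (v i : ℝ)) = (k : ℝ) • w := by
    funext i
    rw [hkv i]
    push_cast
    simp [hw]
  have hQv : (fun i => (v i : ℝ)) ⬝ᵥ (T *ᵥ fun i => (v i : ℝ))
      = (k : ℝ) * (k : ℝ) * (w ⬝ᵥ (T *ᵥ w)) := by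
    rw [hvw, Matrix.mulVec_smul, smul_dotProduct, dotProduct_smul]
    simp [smul_eq_mul]; ring
  have hQw0 : 0 ≤ w ⬝ᵥ (T *ᵥ w) := by
    have h := hT.posSemidef.dotProduct_mulVec_nonneg w
    simpa using h
  have hk1 : (1 : ℝ) ≤ (k : ℝ) * (k : ℝ) := by
    have h1 : (1 : ℤ) ≤ k * k := by
      rcases (by omega : k ≤ -1 ∨ 1 ≤ k) with h | h <;> nlinarith
    exact_mod_cast h1
  have hQle : w ⬝ᵥ (T *ᵥ w) ≤ (fun i => (v i : ℝ)) ⬝ᵥ (T *ᵥ fun i => (v i : ℝ)) := by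
    rw [hQv]
    nlinarith
  rw [hentry]
  exact hQle.trans hvB
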